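/- Let d ≥ 2 be an integer, ℓ a natural number, and α₁, α₂ > 0. There exists a constant β > 0, depending only on d, ℓ, α₁, α₂, such that for all real r > 0, r′ > 0 and all a ∈ (0,1] satisfying α₁ · e^{(d−1)(2r − a r′)/2} ≥ 2(d−1), one has ∫_0^{a r′} e^{(d−1)s} · exp(−α₁ s e^{(d−1)(r − s/2)}) · (α₂ s e^{(d−1)r})^ℓ / ℓ! ds ≤ β · exp( −(d−1)(2r − a(ℓ+1) r′)/2 ). -/

import Mathlib

open Real

theorem pow_div_factorial_le_exp' (x : ℝ) (hx : 0 ≤ x) (n : ℕ) :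
    x ^ n / n.factorial ≤ Real.exp x := by
  refine le_trans ?_ (Real.sum_le_exp_of_nonneg hx (n+1))
  exact Finset.single_le_sum (f := fun i => x ^ i / (i.factorial : ℝ))
    (fun i _ => by positivity) (Finset.self_mem_range_succ n)

theorem stmt_9 (d : ℕ) (hd : 2 ≤ d) (ℓ : ℕ) (α₁ α₂ : ℝ) (hα₁ : 0 < α₁) (hα₂ : 0 < α₂) :
    ∃ β : ℝ, 0 < β ∧ ∀ r r' a : ℝ, 0 < r → 0 < r' → 0 < a → a ≤ 1 →
      2 * ((d : ℝ) - 1) ≤ α₁ * Real.exp (((d : ℝ) - 1) * (2 * r - a * r') / 2) →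
      (∫ s in (0:ℝ)..(a * r'),
          Real.exp (((d : ℝ) - 1) * s) *
            Real.exp (-(α₁ * s * Real.exp (((d : ℝ) - 1) * (r - s / 2)))) *
            (α₂ * s * Real.exp (((d : ℝ) - 1) * r)) ^ ℓ / (ℓ.factorial : ℝ))
        ≤ β * Real.exp (-(((d : ℝ) - 1) * (2 * r - a * ((ℓ : ℝ) + 1) * r') / 2)) := by
  refine ⟨(4 / α₁) ^ (ℓ + 1) * α₂ ^ ℓ, by positivity, ?_⟩
  intro r r' a hr hr' ha ha1 hcond
  set D : ℝ := (d : ℝ) - 1 with hD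
  have hD1 : 1 ≤ D := by
    have h2 : (2:ℝ) ≤ (d:ℝ) := by exact_mod_cast hd
    simp only [hD]; linarith
  have hD0 : 0 ≤ D := by linarith
  set M : ℝ := Real.exp (D * (2 * r - a * r') / 2) with hM
  have hM0 : 0 < M := Real.exp_pos _
  set k : ℝ := α₁ * M / 4 with hk
  have hk0 : 0 < k := by positivity
  set C : ℝ := (α₂ * Real.exp (D * r) / k) ^ ℓ with hC
  have hC0 : 0 ≤ C := by positivity
  set T : ℝ := a * r' with hT
  have hT0 : 0 < T := by positivity
  -- pointwise bound on [0, T]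
  have key : ∀ s ∈ Set.Icc (0:ℝ) T,
      Real.exp (D * s) * Real.exp (-(α₁ * s * Real.exp (D * (r - s / 2)))) *
        (α₂ * s * Real.exp (D * r)) ^ ℓ / (ℓ.factorial : ℝ)
      ≤ C * Real.exp (-(k * s)) := by
    intro s hs
    obtain ⟨hs0, hsT⟩ := hs
    have hE : M ≤ Real.exp (D * (r - s / 2)) := by
      apply Real.exp_le_exp.2
      nlinarith [mul_nonneg hD0 (by linarith : (0:ℝ) ≤ T - s)]
    have hA : Real.exp (D * s) * Real.exp (-(α₁ * s * Real.exp (D * (r - s / 2))))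
        ≤ Real.exp (-(2 * (k * s))) := by
      rw [← Real.exp_add, Real.exp_le_exp]
      have h1 : α₁ * s * M ≤ α₁ * s * Real.exp (D * (r - s / 2)) := by
        apply mul_le_mul_of_nonneg_left hE (by positivity)
      have h2 : 2 * D * s ≤ α₁ * M * s :=
        mul_le_mul_of_nonneg_right hcond hs0
      simp only [hk]
      nlinarith
    have hB : (α₂ * s * Real.exp (D * r)) ^ ℓ / (ℓ.factorial : ℝ)
        ≤ C * Real.exp (k * s) := by
      have hx : (k * s) ^ ℓ / (ℓ.factorial : ℝ) ≤ Real.exp (k * s) :=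
        pow_div_factorial_le_exp' _ (by positivity) ℓ
      have : (α₂ * s * Real.exp (D * r)) ^ ℓ / (ℓ.factorial : ℝ)
          = C * ((k * s) ^ ℓ / (ℓ.factorial : ℝ)) := by
        have hfac : (ℓ.factorial : ℝ) ≠ 0 := Nat.cast_ne_zero.2 (Nat.factorial_ne_zero ℓ)
        simp only [hC]
        field_simp
        have hkk : k ^ ℓ * k⁻¹ ^ ℓ = 1 := by rw [← mul_pow, mul_inv_cancel₀ hk0.ne', one_pow]
        linear_combination (-(α₂ ^ ℓ * s ^ ℓ * Real.exp (D * r) ^ ℓ)) * hkk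
      rw [this]
      exact mul_le_mul_of_nonneg_left hx hC0
    calc Real.exp (D * s) * Real.exp (-(α₁ * s * Real.exp (D * (r - s / 2)))) *
          (α₂ * s * Real.exp (D * r)) ^ ℓ / (ℓ.factorial : ℝ)
        = (Real.exp (D * s) * Real.exp (-(α₁ * s * Real.exp (D * (r - s / 2))))) *
          ((α₂ * s * Real.exp (D * r)) ^ ℓ / (ℓ.factorial : ℝ)) := by ring
      _ ≤ Real.exp (-(2 * (k * s))) * (C * Real.exp (k * s)) := by
          apply mul_le_mul hA hB (by positivity) (Real.exp_pos _).le
      _ = C * Real.exp (-(k * s)) := by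
          rw [mul_comm, mul_assoc, ← Real.exp_add]; ring_nf
  -- integrability
  have hf_int : IntervalIntegrable (fun s =>
      Real.exp (D * s) * Real.exp (-(α₁ * s * Real.exp (D * (r - s / 2)))) *
        (α₂ * s * Real.exp (D * r)) ^ ℓ / (ℓ.factorial : ℝ)) MeasureTheory.volume 0 T := by
    apply Continuous.intervalIntegrable; fun_prop
  have hg_int : IntervalIntegrable (fun s => C * Real.exp (-(k * s)))
      MeasureTheory.volume 0 T := by
    apply Continuous.intervalIntegrable; fun_prop
  have hmono := intervalIntegral.integral_mono_on hT0.le hf_int hg_int key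
  -- value of the g integral
  have hderiv : ∀ s ∈ Set.uIcc (0:ℝ) T,
      HasDerivAt (fun x => -(Real.exp (-(k * x)) / k)) (Real.exp (-(k * s))) s := by
    intro s _
    have h1 : HasDerivAt (fun x : ℝ => -(k * x)) (-k) s := by
      simpa using ((hasDerivAt_id s).const_mul (-k))
    have h2 := (h1.exp.div_const k).neg
    refine h2.congr_deriv ?_
    rw [mul_neg, neg_div, neg_neg, mul_div_assoc, div_self hk0.ne', mul_one]
  have hval : (∫ s in (0:ℝ)..T, Real.exp (-(k * s)))
      = -(Real.exp (-(k * T)) / k) - -(Real.exp (-(k * 0)) / k) :=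
    intervalIntegral.integral_eq_sub_of_hasDerivAt hderiv
      (by apply Continuous.intervalIntegrable; fun_prop)
  have hgval : (∫ s in (0:ℝ)..T, C * Real.exp (-(k * s))) ≤ C / k := by
    rw [intervalIntegral.integral_const_mul, hval]
    have h1 : 0 < Real.exp (-(k * T)) := Real.exp_pos _
    have : -(Real.exp (-(k * T)) / k) - -(Real.exp (-(k * 0)) / k) ≤ 1 / k := by
      have h2 : 0 ≤ Real.exp (-(k * T)) / k := by positivity
      simp only [mul_zero, neg_zero, Real.exp_zero]
      linarith
    calc C * (-(Real.exp (-(k * T)) / k) - -(Real.exp (-(k * 0)) / k))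
        ≤ C * (1 / k) := mul_le_mul_of_nonneg_left this hC0
      _ = C / k := by ring
  -- final equality
  have hfinal : C / k = (4 / α₁) ^ (ℓ + 1) * α₂ ^ ℓ *
      Real.exp (-(D * (2 * r - a * ((ℓ : ℝ) + 1) * r') / 2)) := by
    have hE0 : Real.exp (D * r) ≠ 0 := (Real.exp_pos _).ne'
    have hexp : Real.exp (D * r) ^ ℓ / M ^ (ℓ + 1)
        = Real.exp (-(D * (2 * r - a * ((ℓ : ℝ) + 1) * r') / 2)) := by
      rw [← Real.exp_nat_mul, hM, hT, ← Real.exp_nat_mul, ← Real.exp_sub]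
      congr 1
      push_cast
      ring
    calc C / k = α₂ ^ ℓ * (4 / α₁) ^ (ℓ + 1) * (Real.exp (D * r) ^ ℓ / M ^ (ℓ + 1)) := by
          rw [hC, hk]
          field_simp
          have h1 : M ^ ℓ * M⁻¹ ^ ℓ = 1 := by rw [← mul_pow, mul_inv_cancel₀ hM0.ne', one_pow]
          have h2 : α₁ * α₁⁻¹ = 1 := mul_inv_cancel₀ hα₁.ne'
          linear_combination (α₂ ^ ℓ * Real.exp (D * r) ^ ℓ * M * α₁⁻¹ ^ ℓ * 4 ^ ℓ * 4) * h1 -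
            (α₂ ^ ℓ * Real.exp (D * r) ^ ℓ * M * α₁⁻¹ ^ ℓ * 4 ^ ℓ * 4) * h2
      _ = _ := by rw [hexp]; ring
  calc (∫ s in (0:ℝ)..T,
          Real.exp (D * s) * Real.exp (-(α₁ * s * Real.exp (D * (r - s / 2)))) *
            (α₂ * s * Real.exp (D * r)) ^ ℓ / (ℓ.factorial : ℝ))
      ≤ ∫ s in (0:ℝ)..T, C * Real.exp (-(k * s)) := hmono
    _ ≤ C / k := hgval
    _ = _ := hfinal
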